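/- (Classification of vectors of type (ii) in L₆) Let c ∈ ℤ⁶ be nonzero. Then cᵀG₆⁻¹c = 2/3 and the least positive integer k with k·G₆⁻¹c ∈ ℤ⁶ equals 3 if and only if c or −c belongs to the set {(0,0,1,0,0,0), (0,0,0,1,0,0), (0,0,1,−1,0,0), (0,1,0,0,0,−1), (0,1,0,0,0,1)}. -/

import Mathlib

open Matrix

/-- The Gram matrix of the even positive definite lattice `L₆` (determinant 108). -/
def G6 : Matrix (Fin 6) (Fin 6) ℚ :=
  !![4, 2, 0, 0, -2, 0;
     2, 4, 0, 0, -1, 0;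
     0, 0, 2, -1, 0, 0;
     0, 0, -1, 2, 0, 0;
     -2, -1, 0, 0, 2, 1;
     0, 0, 0, 0, 1, 4]

/-- The inverse of `G6`. -/
def B6 : Matrix (Fin 6) (Fin 6) ℚ :=
  !![2/3, -1/6, 0, 0, 2/3, -1/6;
     -1/6, 1/3, 0, 0, 0, 0;
     0, 0, 2/3, 1/3, 0, 0;
     0, 0, 1/3, 2/3, 0, 0;
     2/3, 0, 0, 0, 4/3, -1/3;
     -1/6, 0, 0, 0, -1/3, 1/3]

lemma G6_inv : G6⁻¹ = B6 := by
  have h : G6 * B6 = 1 := by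
    ext i j
    fin_cases i <;> fin_cases j <;>
      norm_num [G6, B6, Matrix.mul_apply, Fin.sum_univ_succ, Matrix.cons_val_succ,
        Matrix.cons_val_zero, Matrix.one_apply, Fin.ext_iff]
  exact inv_eq_right_inv h

lemma vec6_eq_iff {α : Type*} (a0 a1 a2 a3 a4 a5 b0 b1 b2 b3 b4 b5 : α) :
    ![a0,a1,a2,a3,a4,a5] = ![b0,b1,b2,b3,b4,b5] ↔
      a0=b0 ∧ a1=b1 ∧ a2=b2 ∧ a3=b3 ∧ a4=b4 ∧ a5=b5 := by
  constructor
  · intro h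
    exact ⟨congrFun h 0, congrFun h 1, congrFun h 2, congrFun h 3, congrFun h 4, congrFun h 5⟩
  · rintro ⟨rfl,rfl,rfl,rfl,rfl,rfl⟩; rfl

set_option maxHeartbeats 1000000 in
lemma bounds6 (a0 a1 a2 a3 a4 a5 : ℤ)
    (hZ : (72*(a0*a0) + 36*(a1*a1) + 72*(a2*a2) + 72*(a3*a3) + 144*(a4*a4) + 36*(a5*a5)
      - 36*(a0*a1) + 144*(a0*a4) - 36*(a0*a5) + 72*(a2*a3) - 72*(a4*a5) : ℤ) = 72) :
    (-1 ≤ a0 ∧ a0 ≤ 1) ∧ (-1 ≤ a1 ∧ a1 ≤ 1) ∧ (-1 ≤ a2 ∧ a2 ≤ 1) ∧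
    (-1 ≤ a3 ∧ a3 ≤ 1) ∧ (-1 ≤ a4 ∧ a4 ≤ 1) ∧ (-1 ≤ a5 ∧ a5 ≤ 1) := by
  have e0 : 540*(a0*a0) ≤ 1440 := by
    linarith [hZ, sq_nonneg (5*a0-2*a1+8*a4-2*a5), sq_nonneg (4*a1+4*a4-a5),
      sq_nonneg (2*a2+a3), sq_nonneg a3, sq_nonneg a5,
      (by ring : 20*(72*(a0*a0) + 36*(a1*a1) + 72*(a2*a2) + 72*(a3*a3) + 144*(a4*a4) + 36*(a5*a5)
      - 36*(a0*a1) + 144*(a0*a4) - 36*(a0*a5) + 72*(a2*a3) - 72*(a4*a5)) - 540*(a0*a0) =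
      36*(5*a0-2*a1+8*a4-2*a5)^2 + 36*(4*a1+4*a4-a5)^2 + 360*(2*a2+a3)^2
        + 1080*a3^2 + 540*a5^2)]
  have e1 : 108*(a1*a1) ≤ 288 := by
    linarith [hZ, sq_nonneg (4*a0-a1+4*a4-a5), sq_nonneg (a1+4*a4-a5),
      sq_nonneg (2*a2+a3), sq_nonneg a3, sq_nonneg a5,
      (by ring : 4*(72*(a0*a0) + 36*(a1*a1) + 72*(a2*a2) + 72*(a3*a3) + 144*(a4*a4) + 36*(a5*a5)
      - 36*(a0*a1) + 144*(a0*a4) - 36*(a0*a5) + 72*(a2*a3) - 72*(a4*a5)) - 108*(a1*a1) =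
      18*(4*a0-a1+4*a4-a5)^2 + 18*(a1+4*a4-a5)^2 + 72*(2*a2+a3)^2
        + 216*a3^2 + 108*a5^2)]
  have e2 : 756*(a2*a2) ≤ 1008 := by
    linarith [hZ, sq_nonneg (4*a0-a1+4*a4-a5), sq_nonneg (7*a1+4*a4-a5),
      sq_nonneg (a2+2*a3), sq_nonneg (4*a4-a5), sq_nonneg a5,
      (by ring : 14*(72*(a0*a0) + 36*(a1*a1) + 72*(a2*a2) + 72*(a3*a3) + 144*(a4*a4) + 36*(a5*a5)
      - 36*(a0*a1) + 144*(a0*a4) - 36*(a0*a5) + 72*(a2*a3) - 72*(a4*a5)) - 756*(a2*a2) =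
      63*(4*a0-a1+4*a4-a5)^2 + 9*(7*a1+4*a4-a5)^2 + 252*(a2+2*a3)^2
        + 54*(4*a4-a5)^2 + 378*a5^2)]
  have e3 : 756*(a3*a3) ≤ 1008 := by
    linarith [hZ, sq_nonneg (4*a0-a1+4*a4-a5), sq_nonneg (7*a1+4*a4-a5),
      sq_nonneg (2*a2+a3), sq_nonneg (4*a4-a5), sq_nonneg a5,
      (by ring : 14*(72*(a0*a0) + 36*(a1*a1) + 72*(a2*a2) + 72*(a3*a3) + 144*(a4*a4) + 36*(a5*a5)
      - 36*(a0*a1) + 144*(a0*a4) - 36*(a0*a5) + 72*(a2*a3) - 72*(a4*a5)) - 756*(a3*a3) =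
      63*(4*a0-a1+4*a4-a5)^2 + 9*(7*a1+4*a4-a5)^2 + 252*(2*a2+a3)^2
        + 54*(4*a4-a5)^2 + 378*a5^2)]
  have e4 : 756*(a4*a4) ≤ 1008 := by
    linarith [hZ, sq_nonneg (4*a0-a1+4*a4-a5), sq_nonneg (7*a1+4*a4-a5),
      sq_nonneg (2*a2+a3), sq_nonneg a3, sq_nonneg (a4-2*a5),
      (by ring : 14*(72*(a0*a0) + 36*(a1*a1) + 72*(a2*a2) + 72*(a3*a3) + 144*(a4*a4) + 36*(a5*a5)
      - 36*(a0*a1) + 144*(a0*a4) - 36*(a0*a5) + 72*(a2*a3) - 72*(a4*a5)) - 756*(a4*a4) =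
      63*(4*a0-a1+4*a4-a5)^2 + 9*(7*a1+4*a4-a5)^2 + 252*(2*a2+a3)^2
        + 756*a3^2 + 108*(a4-2*a5)^2)]
  have e5 : 378*(a5*a5) ≤ 1008 := by
    linarith [hZ, sq_nonneg (4*a0-a1+4*a4-a5), sq_nonneg (7*a1+4*a4-a5),
      sq_nonneg (2*a2+a3), sq_nonneg a3, sq_nonneg (4*a4-a5),
      (by ring : 14*(72*(a0*a0) + 36*(a1*a1) + 72*(a2*a2) + 72*(a3*a3) + 144*(a4*a4) + 36*(a5*a5)
      - 36*(a0*a1) + 144*(a0*a4) - 36*(a0*a5) + 72*(a2*a3) - 72*(a4*a5)) - 378*(a5*a5) =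
      63*(4*a0-a1+4*a4-a5)^2 + 9*(7*a1+4*a4-a5)^2 + 252*(2*a2+a3)^2
        + 756*a3^2 + 54*(4*a4-a5)^2)]
  refine ⟨⟨?_,?_⟩,⟨?_,?_⟩,⟨?_,?_⟩,⟨?_,?_⟩,⟨?_,?_⟩,⟨?_,?_⟩⟩
  · nlinarith [e0, sq_nonneg (a0+2)]
  · nlinarith [e0, sq_nonneg (a0-2)]
  · nlinarith [e1, sq_nonneg (a1+2)]
  · nlinarith [e1, sq_nonneg (a1-2)]
  · nlinarith [e2, sq_nonneg (a2+2)]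
  · nlinarith [e2, sq_nonneg (a2-2)]
  · nlinarith [e3, sq_nonneg (a3+2)]
  · nlinarith [e3, sq_nonneg (a3-2)]
  · nlinarith [e4, sq_nonneg (a4+2)]
  · nlinarith [e4, sq_nonneg (a4-2)]
  · nlinarith [e5, sq_nonneg (a5+2)]
  · nlinarith [e5, sq_nonneg (a5-2)]

lemma rev_case (c : Fin 6 → ℤ) (w : Fin 6 → ℚ)
    (hw : B6.mulVec (fun i => (c i : ℚ)) = w)
    (hQ : (fun i => (c i : ℚ)) ⬝ᵥ w = 2/3)
    (m : Fin 6 → ℤ) (hm : ∀ i, 3 * w i = (m i : ℚ))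
    (i0 : Fin 6) (a : ℤ) (ha : w i0 = (a : ℚ)/3) (hnd : a = 1 ∨ a = -1) :
    (fun i => (c i : ℚ)) ⬝ᵥ B6.mulVec (fun i => (c i : ℚ)) = 2 / 3 ∧
      IsLeast {k : ℕ | 0 < k ∧
        ∀ i, ∃ mm : ℤ, (k : ℚ) * B6.mulVec (fun i => (c i : ℚ)) i = (mm : ℚ)} 3 := by
  rw [hw]
  refine ⟨hQ, ⟨by norm_num, fun i => ⟨m i, by exact_mod_cast hm i⟩⟩, ?_⟩
  rintro k ⟨hk0, hk⟩
  obtain ⟨mm, hmm⟩ := hk i0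
  rw [ha] at hmm
  have h3 : (k : ℤ) * a = 3 * mm := by
    have h4 : (((k : ℤ) * a : ℤ) : ℚ) = ((3 * mm : ℤ) : ℚ) := by
      push_cast
      linear_combination 3 * hmm
    exact_mod_cast h4
  rcases hnd with rfl|rfl <;> omega

set_option maxHeartbeats 4000000 in
/-- Classification of vectors of type (ii) in `L₆`: a nonzero `c ∈ ℤ⁶` has norm
`cᵀG₆⁻¹c = 2/3` and order `3` in the discriminant group iff `±c` is one of the five
listed vectors. -/
theorem L6_type_ii_classification (c : Fin 6 → ℤ) (hc : c ≠ 0) :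
    ((fun i => (c i : ℚ)) ⬝ᵥ G6⁻¹.mulVec (fun i => (c i : ℚ)) = 2 / 3 ∧
      IsLeast {k : ℕ | 0 < k ∧
        ∀ i, ∃ m : ℤ, (k : ℚ) * G6⁻¹.mulVec (fun i => (c i : ℚ)) i = (m : ℚ)} 3) ↔
    (c = ![0, 0, 1, 0, 0, 0] ∨ c = ![0, 0, 0, 1, 0, 0] ∨ c = ![0, 0, 1, -1, 0, 0] ∨
      c = ![0, 1, 0, 0, 0, -1] ∨ c = ![0, 1, 0, 0, 0, 1] ∨
      -c = ![0, 0, 1, 0, 0, 0] ∨ -c = ![0, 0, 0, 1, 0, 0] ∨ -c = ![0, 0, 1, -1, 0, 0] ∨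
      -c = ![0, 1, 0, 0, 0, -1] ∨ -c = ![0, 1, 0, 0, 0, 1]) := by
  obtain ⟨a0,a1,a2,a3,a4,a5,rfl⟩ : ∃ a0 a1 a2 a3 a4 a5, c = ![a0,a1,a2,a3,a4,a5] :=
    ⟨c 0, c 1, c 2, c 3, c 4, c 5, by funext i; fin_cases i <;> rfl⟩
  rw [G6_inv]
  constructor
  · rintro ⟨hQ, ⟨⟨-, h3⟩, -⟩⟩
    simp only [B6, Matrix.mulVec, dotProduct, Fin.sum_univ_succ, Fin.sum_univ_zero,
      Matrix.cons_val_succ, Matrix.cons_val_zero, Matrix.of_apply] at hQ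
    have hZ : (72*(a0*a0) + 36*(a1*a1) + 72*(a2*a2) + 72*(a3*a3) + 144*(a4*a4) + 36*(a5*a5)
        - 36*(a0*a1) + 144*(a0*a4) - 36*(a0*a5) + 72*(a2*a3) - 72*(a4*a5) : ℤ) = 72 := by
      have h2 : ((72*(a0*a0) + 36*(a1*a1) + 72*(a2*a2) + 72*(a3*a3) + 144*(a4*a4) + 36*(a5*a5)
          - 36*(a0*a1) + 144*(a0*a4) - 36*(a0*a5) + 72*(a2*a3) - 72*(a4*a5) : ℤ) : ℚ) = 72 := by
        push_cast
        linear_combination (108 : ℚ) * hQ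
      exact_mod_cast h2
    obtain ⟨⟨b0l, b0u⟩, ⟨b1l, b1u⟩, ⟨b2l, b2u⟩, ⟨b3l, b3u⟩, ⟨b4l, b4u⟩, ⟨b5l, b5u⟩⟩ :=
      bounds6 a0 a1 a2 a3 a4 a5 hZ
    obtain ⟨m, hm⟩ := h3 1
    simp only [B6, Matrix.mulVec, dotProduct, Fin.sum_univ_succ, Fin.sum_univ_zero,
      Matrix.cons_val_succ, Matrix.cons_val_zero, Matrix.of_apply, Matrix.cons_val_one,
      Matrix.head_cons] at hm
    have hpar : (-a0 + 2*a1 : ℤ) = 2*m := by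
      have h5 : ((-a0 + 2*a1 : ℤ) : ℚ) = ((2*m : ℤ) : ℚ) := by
        push_cast
        linear_combination 2 * hm
      exact_mod_cast h5
    have ha0 : a0 = 0 := by omega
    subst ha0
    simp only [Matrix.neg_cons, Matrix.neg_empty, vec6_eq_iff, neg_zero]
    interval_cases a1 <;> interval_cases a2 <;> interval_cases a3 <;>
      interval_cases a4 <;> interval_cases a5 <;> first | omega | decide
  · rintro (h|h|h|h|h|h|h|h|h|h)
    · rw [h]
      refine rev_case _ (![0,0,2/3,1/3,0,0]) ?_ ?_ (![0,0,2,1,0,0]) ?_ 3 (1) ?_ (by norm_num)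
      · funext i; fin_cases i <;> norm_num [B6, Matrix.mulVec, dotProduct, Fin.sum_univ_succ, Fin.sum_univ_zero, Matrix.cons_val_succ, Matrix.cons_val_zero, Matrix.of_apply]
      · norm_num [dotProduct, Fin.sum_univ_succ, Fin.sum_univ_zero, Matrix.cons_val_succ, Matrix.cons_val_zero]
      · intro i; fin_cases i <;> norm_num
      · norm_num; rfl
    · rw [h]
      refine rev_case _ (![0,0,1/3,2/3,0,0]) ?_ ?_ (![0,0,1,2,0,0]) ?_ 2 (1) ?_ (by norm_num)
      · funext i; fin_cases i <;> norm_num [B6, Matrix.mulVec, dotProduct, Fin.sum_univ_succ, Fin.sum_univ_zero, Matrix.cons_val_succ, Matrix.cons_val_zero, Matrix.of_apply]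
      · norm_num [dotProduct, Fin.sum_univ_succ, Fin.sum_univ_zero, Matrix.cons_val_succ, Matrix.cons_val_zero]
      · intro i; fin_cases i <;> norm_num
      · norm_num; rfl
    · rw [h]
      refine rev_case _ (![0,0,1/3,-1/3,0,0]) ?_ ?_ (![0,0,1,-1,0,0]) ?_ 2 (1) ?_ (by norm_num)
      · funext i; fin_cases i <;> norm_num [B6, Matrix.mulVec, dotProduct, Fin.sum_univ_succ, Fin.sum_univ_zero, Matrix.cons_val_succ, Matrix.cons_val_zero, Matrix.of_apply]
      · norm_num [dotProduct, Fin.sum_univ_succ, Fin.sum_univ_zero, Matrix.cons_val_succ, Matrix.cons_val_zero]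
      · intro i; fin_cases i <;> norm_num
      · norm_num; rfl
    · rw [h]
      refine rev_case _ (![0,1/3,0,0,1/3,-1/3]) ?_ ?_ (![0,1,0,0,1,-1]) ?_ 1 (1) ?_ (by norm_num)
      · funext i; fin_cases i <;> norm_num [B6, Matrix.mulVec, dotProduct, Fin.sum_univ_succ, Fin.sum_univ_zero, Matrix.cons_val_succ, Matrix.cons_val_zero, Matrix.of_apply]
      · norm_num [dotProduct, Fin.sum_univ_succ, Fin.sum_univ_zero, Matrix.cons_val_succ, Matrix.cons_val_zero]
      · intro i; fin_cases i <;> norm_num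
      · norm_num
    · rw [h]
      refine rev_case _ (![-1/3,1/3,0,0,-1/3,1/3]) ?_ ?_ (![-1,1,0,0,-1,1]) ?_ 1 (1) ?_ (by norm_num)
      · funext i; fin_cases i <;> norm_num [B6, Matrix.mulVec, dotProduct, Fin.sum_univ_succ, Fin.sum_univ_zero, Matrix.cons_val_succ, Matrix.cons_val_zero, Matrix.of_apply]
      · norm_num [dotProduct, Fin.sum_univ_succ, Fin.sum_univ_zero, Matrix.cons_val_succ, Matrix.cons_val_zero]
      · intro i; fin_cases i <;> norm_num
      · norm_num
    · rw [neg_eq_iff_eq_neg] at h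
      simp only [Matrix.neg_cons, Matrix.neg_empty, neg_zero] at h
      rw [h]
      refine rev_case _ (![0,0,-2/3,-1/3,0,0]) ?_ ?_ (![0,0,-2,-1,0,0]) ?_ 3 (-1) ?_ (by norm_num)
      · funext i; fin_cases i <;> norm_num [B6, Matrix.mulVec, dotProduct, Fin.sum_univ_succ, Fin.sum_univ_zero, Matrix.cons_val_succ, Matrix.cons_val_zero, Matrix.of_apply]
      · norm_num [dotProduct, Fin.sum_univ_succ, Fin.sum_univ_zero, Matrix.cons_val_succ, Matrix.cons_val_zero]
      · intro i; fin_cases i <;> norm_num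
      · norm_num; rfl
    · rw [neg_eq_iff_eq_neg] at h
      simp only [Matrix.neg_cons, Matrix.neg_empty, neg_zero] at h
      rw [h]
      refine rev_case _ (![0,0,-1/3,-2/3,0,0]) ?_ ?_ (![0,0,-1,-2,0,0]) ?_ 2 (-1) ?_ (by norm_num)
      · funext i; fin_cases i <;> norm_num [B6, Matrix.mulVec, dotProduct, Fin.sum_univ_succ, Fin.sum_univ_zero, Matrix.cons_val_succ, Matrix.cons_val_zero, Matrix.of_apply]
      · norm_num [dotProduct, Fin.sum_univ_succ, Fin.sum_univ_zero, Matrix.cons_val_succ, Matrix.cons_val_zero]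
      · intro i; fin_cases i <;> norm_num
      · norm_num; rfl
    · rw [neg_eq_iff_eq_neg] at h
      simp only [Matrix.neg_cons, Matrix.neg_empty, neg_zero] at h
      rw [h]
      refine rev_case _ (![0,0,-1/3,1/3,0,0]) ?_ ?_ (![0,0,-1,1,0,0]) ?_ 2 (-1) ?_ (by norm_num)
      · funext i; fin_cases i <;> norm_num [B6, Matrix.mulVec, dotProduct, Fin.sum_univ_succ, Fin.sum_univ_zero, Matrix.cons_val_succ, Matrix.cons_val_zero, Matrix.of_apply]
      · norm_num [dotProduct, Fin.sum_univ_succ, Fin.sum_univ_zero, Matrix.cons_val_succ, Matrix.cons_val_zero]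
      · intro i; fin_cases i <;> norm_num
      · norm_num; rfl
    · rw [neg_eq_iff_eq_neg] at h
      simp only [Matrix.neg_cons, Matrix.neg_empty, neg_zero] at h
      rw [h]
      refine rev_case _ (![0,-1/3,0,0,-1/3,1/3]) ?_ ?_ (![0,-1,0,0,-1,1]) ?_ 1 (-1) ?_ (by norm_num)
      · funext i; fin_cases i <;> norm_num [B6, Matrix.mulVec, dotProduct, Fin.sum_univ_succ, Fin.sum_univ_zero, Matrix.cons_val_succ, Matrix.cons_val_zero, Matrix.of_apply]
      · norm_num [dotProduct, Fin.sum_univ_succ, Fin.sum_univ_zero, Matrix.cons_val_succ, Matrix.cons_val_zero]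
      · intro i; fin_cases i <;> norm_num
      · norm_num
    · rw [neg_eq_iff_eq_neg] at h
      simp only [Matrix.neg_cons, Matrix.neg_empty, neg_zero] at h
      rw [h]
      refine rev_case _ (![1/3,-1/3,0,0,1/3,-1/3]) ?_ ?_ (![1,-1,0,0,1,-1]) ?_ 1 (-1) ?_ (by norm_num)
      · funext i; fin_cases i <;> norm_num [B6, Matrix.mulVec, dotProduct, Fin.sum_univ_succ, Fin.sum_univ_zero, Matrix.cons_val_succ, Matrix.cons_val_zero, Matrix.of_apply]
      · norm_num [dotProduct, Fin.sum_univ_succ, Fin.sum_univ_zero, Matrix.cons_val_succ, Matrix.cons_val_zero]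
      · intro i; fin_cases i <;> norm_num
      · norm_num
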